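/- The function x ↦ [1/log(log(πx)) − 1/log(log(π(x+1/2)))] / [1/log(log(π(x+1/2))) − 1/log(log(π(x+1)))] is decreasing for sufficiently large x and tends to 1 as x → ∞. Consequently, for all sufficiently large x its value lies strictly in the interval (1, 2). -/

import Mathlib

open Real Set Filter intervalIntegral

noncomputable def gg (x : ℝ) : ℝ := 1 / Real.log (Real.log (Real.pi * x))
noncomputable def phi (x : ℝ) : ℝ :=
  1 / (x * Real.log (Real.pi * x) * (Real.log (Real.log (Real.pi * x)))^2)
noncomputable def NN (x : ℝ) : ℝ :=
  -(Real.log x + Real.log (Real.log (Real.pi * x)) +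
    2 * Real.log (Real.log (Real.log (Real.pi * x))))
noncomputable def DD (x : ℝ) : ℝ := gg x - gg (x + 1/2)

lemma hx_pos {x : ℝ} (hx : 3 ≤ x) : 0 < x := by linarith
lemma hpx_pos {x : ℝ} (hx : 3 ≤ x) : 0 < Real.pi * x :=
  mul_pos Real.pi_pos (hx_pos hx)
lemma hpx_ge {x : ℝ} (hx : 3 ≤ x) : 9 ≤ Real.pi * x := by
  nlinarith [Real.pi_gt_three]
lemma hL_gt {x : ℝ} (hx : 3 ≤ x) : 2 < Real.log (Real.pi * x) := by
  have h9 : (2:ℝ) < Real.log 9 := by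
    rw [Real.lt_log_iff_exp_lt (by norm_num)]
    have h := Real.exp_one_lt_d9
    have : Real.exp 2 = Real.exp 1 * Real.exp 1 := by
      rw [← Real.exp_add]; norm_num
    nlinarith [Real.exp_pos 1]
  have := (Real.log_le_log_iff (by norm_num) (hpx_pos hx)).2 (hpx_ge hx)
  linarith
lemma hL_pos {x : ℝ} (hx : 3 ≤ x) : 0 < Real.log (Real.pi * x) := by
  linarith [hL_gt hx]
lemma hLL_pos {x : ℝ} (hx : 3 ≤ x) : 0 < Real.log (Real.log (Real.pi * x)) :=
  Real.log_pos (by linarith [hL_gt hx])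

lemma L_mono {a b : ℝ} (ha : 3 ≤ a) (hab : a ≤ b) :
    Real.log (Real.pi * a) ≤ Real.log (Real.pi * b) := by
  refine (Real.log_le_log_iff (hpx_pos ha) (hpx_pos (ha.trans hab))).2 ?_
  nlinarith [Real.pi_pos]
lemma LL_mono {a b : ℝ} (ha : 3 ≤ a) (hab : a ≤ b) :
    Real.log (Real.log (Real.pi * a)) ≤ Real.log (Real.log (Real.pi * b)) :=
  (Real.log_le_log_iff (hL_pos ha) (hL_pos (ha.trans hab))).2 (L_mono ha hab)
lemma L_strict {a b : ℝ} (ha : 3 ≤ a) (hab : a < b) :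
    Real.log (Real.pi * a) < Real.log (Real.pi * b) := by
  refine Real.log_lt_log (hpx_pos ha) ?_
  nlinarith [Real.pi_pos]
lemma LL_strict {a b : ℝ} (ha : 3 ≤ a) (hab : a < b) :
    Real.log (Real.log (Real.pi * a)) < Real.log (Real.log (Real.pi * b)) :=
  Real.log_lt_log (hL_pos ha) (L_strict ha hab)

lemma hasDeriv_L {x : ℝ} (hx : 3 ≤ x) :
    HasDerivAt (fun y => Real.log (Real.pi * y)) x⁻¹ x := by
  have h1 : HasDerivAt (fun y : ℝ => Real.pi * y) Real.pi x := by
    simpa using (hasDerivAt_id x).const_mul Real.pi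
  have h2 := (Real.hasDerivAt_log (ne_of_gt (hpx_pos hx))).comp x h1
  refine h2.congr_deriv ?_
  field_simp [ne_of_gt (hx_pos hx)]

lemma hasDeriv_LL {x : ℝ} (hx : 3 ≤ x) :
    HasDerivAt (fun y => Real.log (Real.log (Real.pi * y)))
      (x * Real.log (Real.pi * x))⁻¹ x := by
  have h2 := (Real.hasDerivAt_log (ne_of_gt (hL_pos hx))).comp x (hasDeriv_L hx)
  refine h2.congr_deriv ?_
  rw [mul_inv]; ring

lemma hasDeriv_LLL {x : ℝ} (hx : 3 ≤ x) :
    HasDerivAt (fun y => Real.log (Real.log (Real.log (Real.pi * y))))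
      (x * Real.log (Real.pi * x) * Real.log (Real.log (Real.pi * x)))⁻¹ x := by
  have h2 := (Real.hasDerivAt_log (ne_of_gt (hLL_pos hx))).comp x (hasDeriv_LL hx)
  refine h2.congr_deriv ?_
  rw [mul_inv]; ring

lemma hasDeriv_gg {x : ℝ} (hx : 3 ≤ x) : HasDerivAt gg (-phi x) x := by
  have h := (hasDeriv_LL hx).inv (ne_of_gt (hLL_pos hx))
  have hgg : gg = fun y => (Real.log (Real.log (Real.pi * y)))⁻¹ := by
    funext y; simp [gg, one_div]
  rw [hgg]
  refine h.congr_deriv ?_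
  rw [phi, div_eq_mul_inv, div_eq_mul_inv]
  rw [mul_inv, mul_inv]
  ring

lemma hasDeriv_NN {x : ℝ} (hx : 3 ≤ x) :
    HasDerivAt NN (-(x⁻¹ + (x * Real.log (Real.pi * x))⁻¹ +
      2 * (x * Real.log (Real.pi * x) * Real.log (Real.log (Real.pi * x)))⁻¹)) x := by
  have h1 := Real.hasDerivAt_log (ne_of_gt (hx_pos hx))
  exact ((h1.add (hasDeriv_LL hx)).add ((hasDeriv_LLL hx).const_mul 2)).neg

lemma contOn_L : ContinuousOn (fun x => Real.log (Real.pi * x)) (Set.Ici 3) :=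
  ContinuousOn.log (continuous_const.mul continuous_id).continuousOn
    (fun x hx => ne_of_gt (hpx_pos hx))
lemma contOn_LL : ContinuousOn (fun x => Real.log (Real.log (Real.pi * x))) (Set.Ici 3) :=
  ContinuousOn.log contOn_L (fun x hx => ne_of_gt (hL_pos hx))
lemma contOn_LLL :
    ContinuousOn (fun x => Real.log (Real.log (Real.log (Real.pi * x)))) (Set.Ici 3) :=
  ContinuousOn.log contOn_LL (fun x hx => ne_of_gt (hLL_pos hx))

lemma denom_pos {x : ℝ} (hx : 3 ≤ x) :
    0 < x * Real.log (Real.pi * x) * (Real.log (Real.log (Real.pi * x)))^2 := by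
  exact mul_pos (mul_pos (hx_pos hx) (hL_pos hx)) (pow_pos (hLL_pos hx) 2)

lemma contOn_phi : ContinuousOn phi (Set.Ici 3) := by
  apply ContinuousOn.div continuousOn_const
  · exact ((continuous_id.continuousOn.mul contOn_L).mul (contOn_LL.pow 2))
  · exact fun x hx => ne_of_gt (denom_pos hx)

lemma contOn_NN : ContinuousOn NN (Set.Ici 3) := by
  have h1 : ContinuousOn Real.log (Set.Ici (3:ℝ)) :=
    Real.continuousOn_log.mono (by
      intro x hx
      simp only [Set.mem_compl_iff, Set.mem_singleton_iff]
      intro h; rw [h] at hx; simp at hx; linarith)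
  exact ((h1.add contOn_LL).add (continuousOn_const.mul contOn_LLL)).neg

lemma inv_le_helper {u v : ℝ} (hu : 0 < u) (huv : u ≤ v) : -(u⁻¹) ≤ -(v⁻¹) := by
  have : v⁻¹ ≤ u⁻¹ := by
    apply inv_anti₀ hu huv
  linarith

lemma NN_convex : ConvexOn ℝ (Set.Ici 3) NN := by
  apply MonotoneOn.convexOn_of_deriv (convex_Ici 3) contOn_NN
  · rw [interior_Ici]
    intro x hx
    exact (hasDeriv_NN (le_of_lt hx)).differentiableAt.differentiableWithinAt
  · rw [interior_Ici]
    intro a ha b hb hab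
    rw [Set.mem_Ioi] at ha hb
    rw [(hasDeriv_NN ha.le).deriv, (hasDeriv_NN hb.le).deriv]
    have ha0 := hx_pos ha.le
    have hLa := hL_pos ha.le
    have hLLa := hLL_pos ha.le
    have h1 := inv_le_helper ha0 hab
    have h2 : a * Real.log (Real.pi * a) ≤ b * Real.log (Real.pi * b) :=
      mul_le_mul hab (L_mono ha.le hab) hLa.le (by linarith)
    have h3 : a * Real.log (Real.pi * a) * Real.log (Real.log (Real.pi * a)) ≤
        b * Real.log (Real.pi * b) * Real.log (Real.log (Real.pi * b)) :=
      mul_le_mul h2 (LL_mono ha.le hab) hLLa.le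
        (mul_pos (hx_pos (ha.le.trans hab)) (hL_pos (ha.le.trans hab))).le
    have h2' := inv_le_helper (by positivity) h2
    have h3' := inv_le_helper (by positivity) h3
    linarith

lemma phi_eq {x : ℝ} (hx : 3 ≤ x) : phi x = Real.exp (NN x) := by
  have hx0 := hx_pos hx
  have hL := hL_pos hx
  have hLL := hLL_pos hx
  have key : Real.exp (Real.log x + Real.log (Real.log (Real.pi * x)) +
      2 * Real.log (Real.log (Real.log (Real.pi * x)))) =
      x * Real.log (Real.pi * x) * (Real.log (Real.log (Real.pi * x)))^2 := by
    rw [show (2:ℝ) * Real.log (Real.log (Real.log (Real.pi * x))) =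
      Real.log (Real.log (Real.log (Real.pi * x))) +
      Real.log (Real.log (Real.log (Real.pi * x))) by ring]
    rw [Real.exp_add, Real.exp_add, Real.exp_add, Real.exp_log hx0, Real.exp_log hL,
      Real.exp_log hLL]
    ring
  rw [NN, Real.exp_neg, key, phi, one_div]

lemma NN_two_point {A B C D : ℝ} (hA : 3 ≤ A) (hB : 3 ≤ B) (hAC : A ≤ C) (hCB : C ≤ B)
    (hs : A + B = C + D) : NN C + NN D ≤ NN A + NN B := by
  rcases eq_or_lt_of_le (hAC.trans hCB) with h | h
  · have hCA : C = A := le_antisymm (h ▸ hCB) hAC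
    have hDB : D = B := by linarith
    rw [hCA, hDB]
  · set l := (B - C)/(B - A) with hl
    have hBA : 0 < B - A := by linarith
    have hl0 : 0 ≤ l := by
      apply div_nonneg (by linarith) hBA.le
    have hl1 : l ≤ 1 := by
      rw [div_le_one hBA]; linarith
    have e1 : l • A + (1 - l) • B = C := by
      simp only [smul_eq_mul, hl]
      field_simp
      ring
    have e2 : (1 - l) • A + l • B = D := by
      have hD : D = A + B - C := by linarith
      rw [hD]
      simp only [smul_eq_mul, hl]
      field_simp
      ring
    have hc1 := NN_convex.2 (Set.mem_Ici.2 hA) (Set.mem_Ici.2 hB) hl0 (by linarith)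
      (by ring : l + (1 - l) = 1)
    have hc2 := NN_convex.2 (Set.mem_Ici.2 hA) (Set.mem_Ici.2 hB) (by linarith : (0:ℝ) ≤ 1 - l)
      hl0 (by ring : 1 - l + l = 1)
    rw [e1] at hc1
    rw [e2] at hc2
    simp only [smul_eq_mul] at hc1 hc2
    linarith

lemma phi_two {A B C D : ℝ} (hA : 3 ≤ A) (hB : 3 ≤ B) (hAC : A ≤ C) (hCB : C ≤ B)
    (hs : A + B = C + D) : phi C * phi D ≤ phi A * phi B := by
  have hC3 : 3 ≤ C := hA.trans hAC
  have hD3 : 3 ≤ D := by linarith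
  rw [phi_eq hC3, phi_eq hD3, phi_eq hA, phi_eq hB, ← Real.exp_add, ← Real.exp_add]
  exact Real.exp_le_exp.2 (NN_two_point hA hB hAC hCB hs)

lemma phi_contOn_Icc {a b : ℝ} (ha : 3 ≤ a) : ContinuousOn phi (Set.uIcc a b) ∨ True := Or.inr trivial

lemma phi_ii {a b : ℝ} (ha : 3 ≤ a) (hab : a ≤ b) : IntervalIntegrable phi MeasureTheory.volume a b := by
  apply ContinuousOn.intervalIntegrable
  apply contOn_phi.mono
  rw [Set.uIcc_of_le hab]
  intro t ht
  exact Set.mem_Ici.2 (ha.trans ht.1)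

lemma DD_int {x : ℝ} (hx : 3 ≤ x) : DD x = ∫ s in x..(x + 1/2), phi s := by
  have hle : x ≤ x + 1/2 := by linarith
  have h1 : ∀ t ∈ Set.uIcc x (x + 1/2), HasDerivAt gg (-phi t) t := by
    intro t ht
    rw [Set.uIcc_of_le hle] at ht
    exact hasDeriv_gg (hx.trans ht.1)
  have h2 : IntervalIntegrable (fun s => -phi s) MeasureTheory.volume x (x + 1/2) :=
    (phi_ii hx hle).neg
  have h3 := intervalIntegral.integral_eq_sub_of_hasDerivAt h1 h2
  rw [intervalIntegral.integral_neg] at h3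
  rw [DD]
  linarith

lemma DD_pos {x : ℝ} (hx : 3 ≤ x) : 0 < DD x := by
  rw [DD, gg, gg]
  have h1 := LL_strict hx (by linarith : x < x + 1/2)
  have h2 := hLL_pos hx
  have := one_div_lt_one_div_of_lt h2 h1
  linarith

-- pointwise step for the key inequality
lemma key_pointwise {x y t s : ℝ} (hx : 3 ≤ x) (hxy : x ≤ y)
    (ht1 : x + 1/2 ≤ t) (ht2 : t ≤ x + 1) (hs1 : y ≤ s) (hs2 : s ≤ y + 1/2) :
    phi s * phi t ≤ phi (s - (y - x)) * phi (t + (y - x)) := by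
  have := phi_two (A := s - (y - x)) (B := t + (y - x)) (C := s) (D := t)
    (by linarith) (by linarith) (by linarith) (by linarith) (by ring)
  linarith

lemma key_stepA {x y t : ℝ} (hx : 3 ≤ x) (hxy : x ≤ y)
    (ht1 : x + 1/2 ≤ t) (ht2 : t ≤ x + 1) :
    DD y * phi t ≤ DD x * phi (t + (y - x)) := by
  have hy : 3 ≤ y := hx.trans hxy
  have hley : y ≤ y + 1/2 := by linarith
  rw [DD_int hy, DD_int hx]
  rw [← intervalIntegral.integral_mul_const, ← intervalIntegral.integral_mul_const]
  have hshift : (∫ s in x..(x + 1/2), phi s * phi (t + (y - x))) =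
      ∫ s in y..(y + 1/2), phi (s - (y - x)) * phi (t + (y - x)) := by
    rw [intervalIntegral.integral_comp_sub_right
      (fun s => phi s * phi (t + (y - x))) (y - x)]
    congr 1 <;> ring
  rw [hshift]
  apply intervalIntegral.integral_mono_on hley
  · exact (phi_ii hy hley).mul_const _
  · have : IntervalIntegrable (fun s => phi (s - (y - x))) MeasureTheory.volume y (y + 1/2) := by
      apply ContinuousOn.intervalIntegrable
      apply (contOn_phi.comp ((continuous_id.sub continuous_const).continuousOn))
      rw [Set.uIcc_of_le hley]
      intro u hu
      rw [Set.mem_Icc] at hu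
      simp only [Set.mem_Ici, id_eq, Pi.sub_apply]
      linarith [hu.1]
    exact this.mul_const _
  · intro s hs
    exact key_pointwise hx hxy ht1 ht2 hs.1 hs.2

lemma DD_half_int {x : ℝ} (hx : 3 ≤ x) : DD (x + 1/2) = ∫ t in (x + 1/2)..(x + 1), phi t := by
  rw [DD_int (by linarith : (3:ℝ) ≤ x + 1/2)]
  congr 1
  ring

lemma key {x y : ℝ} (hx : 3 ≤ x) (hxy : x ≤ y) :
    DD y * DD (x + 1/2) ≤ DD x * DD (y + 1/2) := by
  have hy : 3 ≤ y := hx.trans hxy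
  have hle : x + 1/2 ≤ x + 1 := by linarith
  rw [DD_half_int hx, DD_half_int hy]
  rw [← intervalIntegral.integral_const_mul, ← intervalIntegral.integral_const_mul]
  have hshift : (∫ t in (y + 1/2)..(y + 1), DD x * phi t) =
      ∫ t in (x + 1/2)..(x + 1), DD x * phi (t + (y - x)) := by
    rw [intervalIntegral.integral_comp_add_right (fun t => DD x * phi t) (y - x)]
    congr 1 <;> ring
  rw [hshift]
  apply intervalIntegral.integral_mono_on hle
  · exact ((phi_ii (by linarith) hle).const_mul _)
  · have : IntervalIntegrable (fun t => phi (t + (y - x))) MeasureTheory.volume (x + 1/2) (x + 1) := by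
      apply ContinuousOn.intervalIntegrable
      apply (contOn_phi.comp ((continuous_id.add continuous_const).continuousOn))
      rw [Set.uIcc_of_le hle]
      intro u hu
      rw [Set.mem_Icc] at hu
      simp only [Set.mem_Ici, id_eq, Function.comp, Pi.add_apply]
      linarith [hu.1]
    exact this.const_mul _
  · intro t ht
    exact key_stepA hx hxy ht.1 ht.2

lemma uu_strictConcave :
    StrictConcaveOn ℝ (Set.Ici 3) (fun x => Real.log (Real.log (Real.pi * x))) := by
  apply StrictAntiOn.strictConcaveOn_of_deriv (convex_Ici 3) contOn_LL
  rw [interior_Ici]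
  intro a ha b hb hab
  rw [Set.mem_Ioi] at ha hb
  rw [(hasDeriv_LL ha.le).deriv, (hasDeriv_LL hb.le).deriv]
  have hLa := hL_pos ha.le
  have hLb := hL_pos hb.le
  have h2 : a * Real.log (Real.pi * a) < b * Real.log (Real.pi * b) := by
    have := L_mono ha.le hab.le
    nlinarith [hx_pos ha.le]
  exact inv_strictAnti₀ (by positivity) h2

lemma DD_strict {x : ℝ} (hx : 3 ≤ x) : DD (x + 1/2) < DD x := by
  have hmem1 : x ∈ Set.Ici (3:ℝ) := hx
  have hmem2 : x + 1 ∈ Set.Ici (3:ℝ) := by simp; linarith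
  have hne : x ≠ x + 1 := by linarith
  have hc := uu_strictConcave.2 hmem1 hmem2 hne (by norm_num : (0:ℝ) < 1/2)
    (by norm_num : (0:ℝ) < 1/2) (by norm_num)
  have harg : (1/2 : ℝ) • x + (1/2 : ℝ) • (x + 1) = x + 1/2 := by
    simp only [smul_eq_mul]; ring
  rw [harg] at hc
  simp only [smul_eq_mul] at hc
  have hDD : DD x - DD (x + 1/2) = 1/Real.log (Real.log (Real.pi * x)) +
      1/Real.log (Real.log (Real.pi * (x + 1))) -
      2/Real.log (Real.log (Real.pi * (x + 1/2))) := by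
    simp only [DD, gg]
    rw [show x + 1/2 + 1/2 = x + 1 by ring]
    ring
  set a := Real.log (Real.log (Real.pi * x)) with hadef
  set b := Real.log (Real.log (Real.pi * (x + 1))) with hbdef
  set c := Real.log (Real.log (Real.pi * (x + 1/2))) with hcdef
  have ha0 : 0 < a := hLL_pos hx
  have hb0 : 0 < b := hLL_pos (by linarith)
  have hc0 : 0 < c := hLL_pos (by linarith)
  have hkey : 2/c < 1/a + 1/b := by
    rw [div_add_div _ _ (ne_of_gt ha0) (ne_of_gt hb0), div_lt_div_iff₀ hc0 (by positivity)]
    nlinarith [sq_nonneg (a - b)]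
  linarith

lemma phi_anti {a b : ℝ} (ha : 3 ≤ a) (hab : a ≤ b) : phi b ≤ phi a := by
  rw [phi, phi]
  apply one_div_le_one_div_of_le (denom_pos ha)
  have h2 : a * Real.log (Real.pi * a) ≤ b * Real.log (Real.pi * b) :=
    mul_le_mul hab (L_mono ha hab) (hL_pos ha).le (by linarith)
  apply mul_le_mul h2 (pow_le_pow_left₀ (hLL_pos ha).le (LL_mono ha hab) 2)
    (by positivity)
    (mul_nonneg (by linarith) (hL_pos (ha.trans hab)).le)

lemma DD_upper {x : ℝ} (hx : 3 ≤ x) : DD x ≤ (1/2) * phi x := by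
  rw [DD_int hx]
  have hle : x ≤ x + 1/2 := by linarith
  have h := intervalIntegral.integral_mono_on hle (phi_ii hx hle)
    (_root_.intervalIntegrable_const (c := phi x))
    (fun s hs => phi_anti hx hs.1)
  rw [intervalIntegral.integral_const] at h
  rw [smul_eq_mul] at h
  calc (∫ s in x..(x + 1/2), phi s) ≤ (x + 1/2 - x) * phi x := h
    _ = (1/2) * phi x := by ring_nf

lemma DD_lower {x : ℝ} (hx : 3 ≤ x) : (1/2) * phi (x + 1) ≤ DD (x + 1/2) := by
  rw [DD_half_int hx]
  have hle : x + 1/2 ≤ x + 1 := by linarith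
  have h := intervalIntegral.integral_mono_on hle
    (_root_.intervalIntegrable_const (c := phi (x + 1)))
    (phi_ii (by linarith) hle)
    (fun t ht => phi_anti (by linarith [ht.1]) (by linarith [ht.2]))
  rw [intervalIntegral.integral_const, smul_eq_mul] at h
  calc (1/2) * phi (x + 1) = (x + 1 - (x + 1/2)) * phi (x + 1) := by ring
    _ ≤ _ := h

lemma phi_pos {x : ℝ} (hx : 3 ≤ x) : 0 < phi x := by
  rw [phi]
  exact div_pos one_pos (denom_pos hx)

lemma FF_le {x : ℝ} (hx : 3 ≤ x) : DD x / DD (x + 1/2) ≤ phi x / phi (x + 1) := by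
  have h1 := DD_upper hx
  have h2 := DD_lower hx
  have h3 : 0 < (1/2) * phi (x + 1) := by
    have := phi_pos (show (3:ℝ) ≤ x + 1 by linarith); linarith
  calc DD x / DD (x + 1/2) ≤ ((1/2) * phi x) / ((1/2) * phi (x + 1)) :=
        div_le_div₀ (by nlinarith [phi_pos hx]) h1 h3 h2
    _ = phi x / phi (x + 1) := by
        rw [mul_div_mul_left _ _ (by norm_num : (1/2 : ℝ) ≠ 0)]

lemma tpx : Tendsto (fun x : ℝ => Real.pi * x) atTop atTop :=
  Tendsto.const_mul_atTop Real.pi_pos tendsto_id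
lemma tL : Tendsto (fun x : ℝ => Real.log (Real.pi * x)) atTop atTop :=
  Real.tendsto_log_atTop.comp tpx
lemma tLL : Tendsto (fun x : ℝ => Real.log (Real.log (Real.pi * x))) atTop atTop :=
  Real.tendsto_log_atTop.comp tL

lemma t1 : Tendsto (fun x : ℝ => (x + 1) / x) atTop (nhds 1) := by
  have h : Tendsto (fun x : ℝ => 1 + x⁻¹) atTop (nhds (1 + 0)) :=
    tendsto_const_nhds.add tendsto_inv_atTop_zero
  rw [add_zero] at h
  apply h.congr'
  filter_upwards [eventually_gt_atTop (0:ℝ)] with x hx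
  field_simp

lemma tlograt : Tendsto (fun x : ℝ => Real.log ((x + 1) / x)) atTop (nhds 0) := by
  have := (Real.continuousAt_log one_ne_zero).tendsto.comp t1
  simpa [Function.comp_def] using this

lemma t2 : Tendsto (fun x : ℝ => Real.log (Real.pi * (x + 1)) / Real.log (Real.pi * x))
    atTop (nhds 1) := by
  have h : Tendsto (fun x : ℝ => 1 + Real.log ((x + 1) / x) * (Real.log (Real.pi * x))⁻¹)
      atTop (nhds (1 + 0 * 0)) :=
    tendsto_const_nhds.add (tlograt.mul tL.inv_tendsto_atTop)
  norm_num at h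
  apply h.congr'
  filter_upwards [eventually_ge_atTop (3:ℝ)] with x hx
  have hx0 := hx_pos hx
  have hx10 : (0:ℝ) < x + 1 := by linarith
  have hL := hL_pos hx
  have hlogdiff : Real.log ((x + 1) / x) =
      Real.log (Real.pi * (x + 1)) - Real.log (Real.pi * x) := by
    rw [Real.log_div (by linarith) (ne_of_gt hx0),
      Real.log_mul (ne_of_gt Real.pi_pos) (by linarith),
      Real.log_mul (ne_of_gt Real.pi_pos) (ne_of_gt hx0)]
    ring
  rw [hlogdiff]
  field_simp
  ring

lemma t3 : Tendsto (fun x : ℝ =>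
    Real.log (Real.log (Real.pi * (x + 1))) / Real.log (Real.log (Real.pi * x)))
    atTop (nhds 1) := by
  have hlog2 : Tendsto (fun x : ℝ =>
      Real.log (Real.log (Real.pi * (x + 1)) / Real.log (Real.pi * x))) atTop (nhds 0) := by
    have := (Real.continuousAt_log one_ne_zero).tendsto.comp t2
    simpa [Function.comp_def] using this
  have h : Tendsto (fun x : ℝ => 1 +
      Real.log (Real.log (Real.pi * (x + 1)) / Real.log (Real.pi * x)) *
      (Real.log (Real.log (Real.pi * x)))⁻¹) atTop (nhds (1 + 0 * 0)) :=
    tendsto_const_nhds.add (hlog2.mul tLL.inv_tendsto_atTop)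
  norm_num at h
  apply h.congr'
  filter_upwards [eventually_ge_atTop (3:ℝ)] with x hx
  have hL := hL_pos hx
  have hL1 := hL_pos (show (3:ℝ) ≤ x + 1 by linarith)
  have hLL := hLL_pos hx
  have hlogdiff : Real.log (Real.log (Real.pi * (x + 1)) / Real.log (Real.pi * x)) =
      Real.log (Real.log (Real.pi * (x + 1))) - Real.log (Real.log (Real.pi * x)) :=
    Real.log_div (ne_of_gt hL1) (ne_of_gt hL)
  rw [hlogdiff]
  field_simp
  ring

lemma tR : Tendsto (fun x : ℝ => phi x / phi (x + 1)) atTop (nhds 1) := by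
  have h : Tendsto (fun x : ℝ => ((x + 1) / x) *
      (Real.log (Real.pi * (x + 1)) / Real.log (Real.pi * x)) *
      (Real.log (Real.log (Real.pi * (x + 1))) / Real.log (Real.log (Real.pi * x)))^2)
      atTop (nhds (1 * 1 * 1^2)) :=
    (t1.mul t2).mul (t3.pow 2)
  norm_num at h
  apply h.congr'
  filter_upwards [eventually_ge_atTop (3:ℝ)] with x hx
  have hx0 := hx_pos hx
  have hL := hL_pos hx
  have hLL := hLL_pos hx
  have hx1 : (3:ℝ) ≤ x + 1 := by linarith
  have hx10 := hx_pos hx1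
  have hL1 := hL_pos hx1
  have hLL1 := hLL_pos hx1
  rw [phi, phi]
  field_simp

lemma FF_ge_one {x : ℝ} (hx : 3 ≤ x) : 1 < DD x / DD (x + 1/2) :=
  (one_lt_div (DD_pos (by linarith))).2 (DD_strict hx)

lemma tFF : Tendsto (fun x : ℝ => DD x / DD (x + 1/2)) atTop (nhds 1) := by
  apply tendsto_of_tendsto_of_tendsto_of_le_of_le' tendsto_const_nhds tR
  · filter_upwards [eventually_ge_atTop (3:ℝ)] with x hx
    exact (FF_ge_one hx).le
  · filter_upwards [eventually_ge_atTop (3:ℝ)] with x hx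
    exact FF_le hx


/-- The ratio of consecutive half-period lengths
`[1/log(log(πx)) − 1/log(log(π(x+1/2)))] / [1/log(log(π(x+1/2))) − 1/log(log(π(x+1)))]`
is decreasing for large `x`, tends to `1` as `x → ∞`, and eventually lies
strictly between `1` and `2`. -/
theorem stmt10 :
    (∃ x₀ : ℝ, AntitoneOn
      (fun x : ℝ =>
        (1 / Real.log (Real.log (Real.pi * x)) -
            1 / Real.log (Real.log (Real.pi * (x + 1 / 2)))) /
          (1 / Real.log (Real.log (Real.pi * (x + 1 / 2))) -
            1 / Real.log (Real.log (Real.pi * (x + 1)))))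
      (Set.Ici x₀)) ∧
    Filter.Tendsto
      (fun x : ℝ =>
        (1 / Real.log (Real.log (Real.pi * x)) -
            1 / Real.log (Real.log (Real.pi * (x + 1 / 2)))) /
          (1 / Real.log (Real.log (Real.pi * (x + 1 / 2))) -
            1 / Real.log (Real.log (Real.pi * (x + 1)))))
      Filter.atTop (nhds 1) ∧
    (∀ᶠ x : ℝ in Filter.atTop,
      (1 / Real.log (Real.log (Real.pi * x)) -
          1 / Real.log (Real.log (Real.pi * (x + 1 / 2)))) /
        (1 / Real.log (Real.log (Real.pi * (x + 1 / 2))) -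
          1 / Real.log (Real.log (Real.pi * (x + 1)))) ∈ Set.Ioo (1 : ℝ) 2) := by
  have hptwise : ∀ x : ℝ,
      (1 / Real.log (Real.log (Real.pi * x)) -
          1 / Real.log (Real.log (Real.pi * (x + 1 / 2)))) /
        (1 / Real.log (Real.log (Real.pi * (x + 1 / 2))) -
          1 / Real.log (Real.log (Real.pi * (x + 1)))) = DD x / DD (x + 1/2) := by
    intro x
    simp only [DD, gg]
    rw [show x + 1/2 + 1/2 = x + 1 by ring]
  have hfun : (fun x : ℝ =>
      (1 / Real.log (Real.log (Real.pi * x)) -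
          1 / Real.log (Real.log (Real.pi * (x + 1 / 2)))) /
        (1 / Real.log (Real.log (Real.pi * (x + 1 / 2))) -
          1 / Real.log (Real.log (Real.pi * (x + 1))))) =
      fun x : ℝ => DD x / DD (x + 1/2) := funext hptwise
  refine ⟨⟨3, ?_⟩, ?_, ?_⟩
  · rw [hfun]
    intro a ha b hb hab
    rw [Set.mem_Ici] at ha hb
    dsimp only
    rw [div_le_div_iff₀ (DD_pos (by linarith)) (DD_pos (by linarith))]
    exact key ha hab
  · rw [hfun]; exact tFF
  · filter_upwards [eventually_ge_atTop (3:ℝ),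
      tFF.eventually_lt_const (by norm_num : (1:ℝ) < 2)] with x hx h2
    rw [hptwise x]
    exact ⟨FF_ge_one hx, h2⟩
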